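/- For every n ∈ ℕ there exists a constant C_n > 0, independent of a, r, β and T, such that: for all a ≥ 0, r > 0, β ∈ (0, π/2], T ≥ 2, and all (t,s) with t ∈ [0,1], s ∈ ℝ and 2 ≤ φ(t,s) ≤ T, and for all nonnegative integers i, j with i + j ≤ n, one has |∂_t^i ∂_s^j ( ∂²φ/∂s∂t )(t,s)| ≤ C_n e^{(18n + 22) T}. -/

import Mathlib

open Real

noncomputable section

/-- Inverse hyperbolic cosine. -/
def arcosh (x : ℝ) : ℝ := Real.log (x + Real.sqrt (x ^ 2 - 1))

/-- `d₁ = √(a² + r² − 2ar cos β)`. -/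
def d1 (a r β : ℝ) : ℝ := Real.sqrt (a ^ 2 + r ^ 2 - 2 * a * r * Real.cos β)

/-- `d₂ = √(a² + r² + 2ar cos β)`. -/
def d2 (a r β : ℝ) : ℝ := Real.sqrt (a ^ 2 + r ^ 2 + 2 * a * r * Real.cos β)

/-- `A(t,s) = e^{2s+2t} + e^{2t} + d₁² e^{2s} + d₂²`. -/
def Afun (a r β t s : ℝ) : ℝ :=
  Real.exp (2 * s + 2 * t) + Real.exp (2 * t) + d1 a r β ^ 2 * Real.exp (2 * s) +
    d2 a r β ^ 2

/-- `φ(t,s) = arcosh(A(t,s)/(4 r e^{s+t}))`, the lifted distance function. -/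
def phi (a r β t s : ℝ) : ℝ := _root_.arcosh (Afun a r β t s / (4 * r * Real.exp (s + t)))

namespace UBMD

abbrev Mon : Type := Bool × List (Fin 4)
abbrev Expr : Type := List Mon

def bval (b : Bool) : ℝ := cond b 1 (-1)

def flipT : Fin 4 → Bool := ![false, false, true, true]
def flipS : Fin 4 → Bool := ![false, true, false, true]

def sgnOf (flip : Fin 4 → Bool) (i : Fin 4) : ℝ := if flip i then -1 else 1

noncomputable def coef (a r β : ℝ) : Fin 4 → ℝ :=
  ![1/(4*r), 1/(4*r), d1 a r β ^ 2/(4*r), d2 a r β ^ 2/(4*r)]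

noncomputable def gfun (a r β : ℝ) (i : Fin 4) (t s : ℝ) : ℝ :=
  coef a r β i * Real.exp (sgnOf flipS i * s + sgnOf flipT i * t)

noncomputable def evalM (a r β : ℝ) (m : Mon) (t s : ℝ) : ℝ :=
  bval m.1 * (m.2.map (fun i => gfun a r β i t s)).prod

noncomputable def evalE (a r β : ℝ) (E : Expr) (t s : ℝ) : ℝ :=
  (E.map (fun m => evalM a r β m t s)).sum

def negE (E : Expr) : Expr := E.map fun m => (!m.1, m.2)
def scaleE (n : ℕ) (E : Expr) : Expr := (List.replicate n E).flatten
def mulM (m1 m2 : Mon) : Mon := (m1.1 == m2.1, m1.2 ++ m2.2)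
def mulE (E1 E2 : Expr) : Expr := E1.flatMap fun m1 => E2.map (mulM m1)
def dM (flip : Fin 4 → Bool) : Bool → List (Fin 4) → Expr
  | _, [] => []
  | b, i :: l => (xor b (flip i), i :: l) :: (dM flip b l).map fun m => (m.1, i :: m.2)
def dE (flip : Fin 4 → Bool) (E : Expr) : Expr := E.flatMap fun m => dM flip m.1 m.2
def psiE : Expr := [(true, [0]), (true, [1]), (true, [2]), (true, [3])]
def wE : Expr := mulE psiE psiE ++ [(false, [])]
def Dstep (flip : Fin 4 → Bool) (k : ℕ) (E : Expr) : Expr :=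
  mulE (dE flip E) wE ++ scaleE (2*k+1) (negE (mulE E (mulE psiE (dE flip psiE))))
def EsIter : ℕ → Expr
  | 0 => Dstep flipS 0 (dE flipT psiE)
  | j+1 => Dstep flipS (j+1) (EsIter j)
def EtIter (j : ℕ) : ℕ → Expr
  | 0 => EsIter j
  | i+1 => Dstep flipT (i+j+1) (EtIter j i)

abbrev Psi (a r β t s : ℝ) : ℝ := evalE a r β psiE t s
abbrev Sfun (a r β t s : ℝ) : ℝ := Real.sqrt (Psi a r β t s ^ 2 - 1)

section algebra

variable (a r β t s : ℝ)

@[simp] lemma evalE_nil : evalE a r β [] t s = 0 := by simp [evalE]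

@[simp] lemma evalE_cons (m : Mon) (E : Expr) :
    evalE a r β (m :: E) t s = evalM a r β m t s + evalE a r β E t s := by
  simp [evalE]

@[simp] lemma evalE_append (E1 E2 : Expr) :
    evalE a r β (E1 ++ E2) t s = evalE a r β E1 t s + evalE a r β E2 t s := by
  simp [evalE]

lemma evalE_neg (E : Expr) : evalE a r β (negE E) t s = - evalE a r β E t s := by
  induction E with
  | nil => simp [negE]
  | cons m E ih =>
    simp only [negE, List.map_cons] at ih ⊢
    rw [evalE_cons, evalE_cons]
    have : evalM a r β (!m.1, m.2) t s = - evalM a r β m t s := by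
      cases hb : m.1 <;> simp [evalM, bval, hb]
    rw [this, ih]; ring

lemma evalE_scale (n : ℕ) (E : Expr) :
    evalE a r β (scaleE n E) t s = n * evalE a r β E t s := by
  induction n with
  | zero => simp [scaleE]
  | succ n ih =>
    simp only [scaleE, List.replicate_succ, List.flatten_cons, evalE_append] at ih ⊢
    rw [ih]; push_cast; ring

lemma evalM_mulM (m1 m2 : Mon) :
    evalM a r β (mulM m1 m2) t s = evalM a r β m1 t s * evalM a r β m2 t s := by
  have hb : bval (m1.1 == m2.1) = bval m1.1 * bval m2.1 := by
    cases m1.1 <;> cases m2.1 <;> simp [bval]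
  simp [evalM, mulM, hb, List.map_append, List.prod_append]; ring

lemma evalE_map_mulM (m1 : Mon) (E : Expr) :
    evalE a r β (E.map (mulM m1)) t s = evalM a r β m1 t s * evalE a r β E t s := by
  induction E with
  | nil => simp
  | cons m E ih => simp [ih, evalM_mulM]; ring

lemma evalE_mul (E1 E2 : Expr) :
    evalE a r β (mulE E1 E2) t s = evalE a r β E1 t s * evalE a r β E2 t s := by
  induction E1 with
  | nil => simp [mulE]
  | cons m E ih =>
    simp only [mulE, List.flatMap_cons] at ih ⊢
    rw [evalE_append, ih, evalE_map_mulM, evalE_cons]; ring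

lemma evalE_wE : evalE a r β wE t s = Psi a r β t s ^ 2 - 1 := by
  rw [wE, evalE_append, evalE_mul]
  have : evalE a r β [(false, [])] t s = -1 := by simp [evalM, bval]
  rw [this]; ring

lemma evalE_Dstep (flip : Fin 4 → Bool) (k : ℕ) (E : Expr) :
    evalE a r β (Dstep flip k E) t s =
      evalE a r β (dE flip E) t s * (Psi a r β t s ^ 2 - 1) -
        (2*k+1) * (evalE a r β E t s * (Psi a r β t s * evalE a r β (dE flip psiE) t s)) := by
  rw [Dstep, evalE_append, evalE_mul, evalE_wE, evalE_scale, evalE_neg, evalE_mul, evalE_mul]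
  push_cast; ring

end algebra

end UBMD

namespace UBMD

section deriv1

variable (a r β : ℝ)

lemma prod_g_eq (l : List (Fin 4)) (t s : ℝ) :
    (l.map (fun i => gfun a r β i t s)).prod =
      (l.map (coef a r β)).prod *
        Real.exp ((l.map (sgnOf flipS)).sum * s + (l.map (sgnOf flipT)).sum * t) := by
  induction l with
  | nil => simp
  | cons i l ih =>
    simp only [List.map_cons, List.prod_cons, List.sum_cons]
    rw [ih, gfun, mul_mul_mul_comm, ← Real.exp_add]
    congr 1
    ring

lemma evalM_eq (m : Mon) (t s : ℝ) :
    evalM a r β m t s = bval m.1 * ((m.2.map (coef a r β)).prod *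
      Real.exp ((m.2.map (sgnOf flipS)).sum * s + (m.2.map (sgnOf flipT)).sum * t)) := by
  rw [evalM, prod_g_eq]

lemma evalE_map_consHead (i : Fin 4) (E : Expr) (t s : ℝ) :
    evalE a r β (E.map (fun m => (m.1, i :: m.2))) t s = gfun a r β i t s * evalE a r β E t s := by
  induction E with
  | nil => simp
  | cons m E ih =>
    simp only [List.map_cons, evalE_cons, ih]
    have : evalM a r β (m.1, i :: m.2) t s = gfun a r β i t s * evalM a r β m t s := by
      simp [evalM]; ring
    rw [this]; ring

lemma evalE_dM (flip : Fin 4 → Bool) (b : Bool) (l : List (Fin 4)) (t s : ℝ) :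
    evalE a r β (dM flip b l) t s = (l.map (sgnOf flip)).sum * evalM a r β (b, l) t s := by
  induction l with
  | nil => simp [dM, evalM]
  | cons i l ih =>
    simp only [dM, evalE_cons, evalE_map_consHead, ih]
    have h1 : evalM a r β (xor b (flip i), i :: l) t s
        = sgnOf flip i * evalM a r β (b, i :: l) t s := by
      cases hb : b <;> cases hf : flip i <;>
        simp [evalM, bval, sgnOf, hf] <;> ring
    have h2 : evalM a r β (b, i :: l) t s = gfun a r β i t s * evalM a r β (b, l) t s := by
      simp [evalM]; ring
    rw [h1, h2]
    simp only [List.map_cons, List.sum_cons]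
    ring

lemma evalE_dE (flip : Fin 4 → Bool) (E : Expr) (t s : ℝ) :
    evalE a r β (dE flip E) t s =
      (E.map (fun m => ((m.2.map (sgnOf flip)).sum * evalM a r β m t s))).sum := by
  induction E with
  | nil => simp [dE]
  | cons m E ih =>
    simp only [dE, List.flatMap_cons] at ih ⊢
    rw [evalE_append, ih, evalE_dM, List.map_cons, List.sum_cons]

lemma hasDerivAt_evalM_t (m : Mon) (t s : ℝ) :
    HasDerivAt (fun u => evalM a r β m u s) (evalE a r β (dM flipT m.1 m.2) t s) t := by
  have key : ∀ u, evalM a r β m u s = (bval m.1 * (m.2.map (coef a r β)).prod) *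
      Real.exp ((m.2.map (sgnOf flipS)).sum * s + (m.2.map (sgnOf flipT)).sum * u) := by
    intro u; rw [evalM_eq]; ring
  simp only [key]
  have h0 : HasDerivAt (fun u : ℝ => (m.2.map (sgnOf flipS)).sum * s +
      (m.2.map (sgnOf flipT)).sum * u) ((m.2.map (sgnOf flipT)).sum) t := by
    simpa using ((hasDerivAt_id t).const_mul ((m.2.map (sgnOf flipT)).sum)).const_add
      ((m.2.map (sgnOf flipS)).sum * s)
  have h1 := (h0.exp).const_mul (bval m.1 * (m.2.map (coef a r β)).prod)
  refine h1.congr_deriv ?_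
  rw [evalE_dM]
  · rw [evalM_eq]; ring

lemma hasDerivAt_evalM_s (m : Mon) (t s : ℝ) :
    HasDerivAt (fun u => evalM a r β m t u) (evalE a r β (dM flipS m.1 m.2) t s) s := by
  have key : ∀ u, evalM a r β m t u = (bval m.1 * (m.2.map (coef a r β)).prod) *
      Real.exp ((m.2.map (sgnOf flipT)).sum * t + (m.2.map (sgnOf flipS)).sum * u) := by
    intro u; rw [evalM_eq]; ring_nf
  simp only [key]
  have h0 : HasDerivAt (fun u : ℝ => (m.2.map (sgnOf flipT)).sum * t +
      (m.2.map (sgnOf flipS)).sum * u) ((m.2.map (sgnOf flipS)).sum) s := by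
    simpa using ((hasDerivAt_id s).const_mul ((m.2.map (sgnOf flipS)).sum)).const_add
      ((m.2.map (sgnOf flipT)).sum * t)
  have h1 := (h0.exp).const_mul (bval m.1 * (m.2.map (coef a r β)).prod)
  refine h1.congr_deriv ?_
  rw [evalE_dM]
  · rw [evalM_eq]; ring

lemma hasDerivAt_evalE_t (E : Expr) (t s : ℝ) :
    HasDerivAt (fun u => evalE a r β E u s) (evalE a r β (dE flipT E) t s) t := by
  induction E with
  | nil => exact hasDerivAt_const t (0:ℝ)
  | cons m E ih =>
    have h := (hasDerivAt_evalM_t a r β m t s).add ih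
    simp only [evalE_cons]
    refine h.congr_deriv ?_
    simp only [dE, List.flatMap_cons, evalE_append]

lemma hasDerivAt_evalE_s (E : Expr) (t s : ℝ) :
    HasDerivAt (fun u => evalE a r β E t u) (evalE a r β (dE flipS E) t s) s := by
  induction E with
  | nil => exact hasDerivAt_const s (0:ℝ)
  | cons m E ih =>
    have h := (hasDerivAt_evalM_s a r β m t s).add ih
    simp only [evalE_cons]
    refine h.congr_deriv ?_
    simp only [dE, List.flatMap_cons, evalE_append]

end deriv1

end UBMD

namespace UBMD

lemma div_pow_hasDerivAt (N Ψ : ℝ → ℝ) (N' P x : ℝ) (k : ℕ)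
    (hN : HasDerivAt N N' x) (hΨ : HasDerivAt Ψ P x) (h1 : 1 < Ψ x) :
    HasDerivAt (fun u => N u / Real.sqrt (Ψ u ^ 2 - 1) ^ (2*k+1))
      ((N' * (Ψ x ^ 2 - 1) - (2*k+1) * (N x * (Ψ x * P))) /
        Real.sqrt (Ψ x ^ 2 - 1) ^ (2*k+3)) x := by
  have hpos : 0 < Ψ x ^ 2 - 1 := by nlinarith
  have hupos : 0 < Real.sqrt (Ψ x ^ 2 - 1) := Real.sqrt_pos.mpr hpos
  have husq : Real.sqrt (Ψ x ^ 2 - 1) ^ 2 = Ψ x ^ 2 - 1 := Real.sq_sqrt hpos.le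
  have hΨsq : HasDerivAt (fun y => Ψ y ^ 2 - 1) (2 * Ψ x * P) x := by
    have := (hΨ.pow 2).sub_const 1
    refine this.congr_deriv ?_
    norm_num
  have hsqrt : HasDerivAt (fun y => Real.sqrt (Ψ y ^ 2 - 1))
      ((2 * Ψ x * P) / (2 * Real.sqrt (Ψ x ^ 2 - 1))) x := hΨsq.sqrt (ne_of_gt hpos)
  have hpow := hsqrt.pow (2*k+1)
  have hne : Real.sqrt (Ψ x ^ 2 - 1) ^ (2*k+1) ≠ 0 := pow_ne_zero _ hupos.ne'
  have hdiv := hN.div hpow hne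
  refine hdiv.congr_deriv ?_
  have h2 : (2*k+1 : ℕ) - 1 = 2*k := by omega
  rw [h2]
  simp only [Pi.pow_apply]
  set u := Real.sqrt (Ψ x ^ 2 - 1) with hu
  rw [← husq]
  push_cast
  field_simp
  ring

section key

variable (a r β : ℝ)

lemma keyT (k : ℕ) (E : Expr) {t s : ℝ} (h1 : 1 < Psi a r β t s) :
    HasDerivAt (fun u => evalE a r β E u s / Sfun a r β u s ^ (2*k+1))
      (evalE a r β (Dstep flipT k E) t s / Sfun a r β t s ^ (2*k+3)) t := by
  have h := div_pow_hasDerivAt (fun u => evalE a r β E u s) (fun u => Psi a r β u s)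
    _ _ t k (hasDerivAt_evalE_t a r β E t s) (hasDerivAt_evalE_t a r β psiE t s) h1
  convert h using 2
  rw [evalE_Dstep]

lemma keyS (k : ℕ) (E : Expr) {t s : ℝ} (h1 : 1 < Psi a r β t s) :
    HasDerivAt (fun u => evalE a r β E t u / Sfun a r β t u ^ (2*k+1))
      (evalE a r β (Dstep flipS k E) t s / Sfun a r β t s ^ (2*k+3)) s := by
  have h := div_pow_hasDerivAt (fun u => evalE a r β E t u) (fun u => Psi a r β t u)
    _ _ s k (hasDerivAt_evalE_s a r β E t s) (hasDerivAt_evalE_s a r β psiE t s) h1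
  convert h using 2
  rw [evalE_Dstep]

lemma Psi_explicit (t s : ℝ) :
    Psi a r β t s = gfun a r β 0 t s + gfun a r β 1 t s + gfun a r β 2 t s + gfun a r β 3 t s := by
  simp [Psi, psiE, evalE, evalM, bval]
  ring

lemma Afun_eq (hr : 0 < r) (t s : ℝ) :
    Afun a r β t s = 4 * r * Real.exp (s + t) * Psi a r β t s := by
  have hg0 : gfun a r β 0 t s = 1/(4*r) * Real.exp (s + t) := by
    simp [gfun, coef, sgnOf, flipT, flipS]
  have hg1 : gfun a r β 1 t s = 1/(4*r) * Real.exp (-s + t) := by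
    simp [gfun, coef, sgnOf, flipT, flipS]
  have hg2 : gfun a r β 2 t s = d1 a r β ^ 2/(4*r) * Real.exp (s + -t) := by
    simp [gfun, coef, sgnOf, flipT, flipS]
  have hg3 : gfun a r β 3 t s = d2 a r β ^ 2/(4*r) * Real.exp (-s + -t) := by
    simp [gfun, coef, sgnOf, flipT, flipS]
  rw [Psi_explicit, hg0, hg1, hg2, hg3, Afun]
  have e1 : Real.exp (2*s + 2*t) = Real.exp (s+t) * Real.exp (s+t) := by
    rw [← Real.exp_add]; congr 1; ring
  have e2 : Real.exp (2*t) = Real.exp (s+t) * Real.exp (-s+t) := by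
    rw [← Real.exp_add]; congr 1; ring
  have e3 : Real.exp (2*s) = Real.exp (s+t) * Real.exp (s + -t) := by
    rw [← Real.exp_add]; congr 1; ring
  have e4 : (1:ℝ) = Real.exp (s+t) * Real.exp (-s + -t) := by
    rw [← Real.exp_add]
    rw [show s + t + (-s + -t) = 0 by ring, Real.exp_zero]
  rw [e1, e2, e3]
  field_simp
  linear_combination (d2 a r β)^2 * e4

lemma phi_eq (hr : 0 < r) (t s : ℝ) :
    phi a r β t s = Real.log (Psi a r β t s + Real.sqrt (Psi a r β t s ^ 2 - 1)) := by
  rw [phi, _root_.arcosh, Afun_eq a r β hr,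
    mul_div_cancel_left₀ _ (by positivity : 4 * r * Real.exp (s + t) ≠ 0)]

lemma hasDerivAt_phi_t (hr : 0 < r) {t s : ℝ} (h1 : 1 < Psi a r β t s) :
    HasDerivAt (fun u => phi a r β u s)
      (evalE a r β (dE flipT psiE) t s / Sfun a r β t s ^ (2*0+1)) t := by
  have hΨ := hasDerivAt_evalE_t a r β psiE t s
  set D := evalE a r β (dE flipT psiE) t s with hD
  have hpos : 0 < Psi a r β t s ^ 2 - 1 := by nlinarith
  have hSpos : 0 < Sfun a r β t s := Real.sqrt_pos.mpr hpos
  have hSsq : Sfun a r β t s ^ 2 = Psi a r β t s ^ 2 - 1 := Real.sq_sqrt hpos.le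
  have hfun : (fun u => phi a r β u s) =
      fun u => Real.log (Psi a r β u s + Real.sqrt (Psi a r β u s ^ 2 - 1)) :=
    funext fun u => phi_eq a r β hr u s
  rw [hfun]
  have h2 : HasDerivAt (fun u => Psi a r β u s ^ 2 - 1) (2 * Psi a r β t s * D) t := by
    have := (hΨ.pow 2).sub_const 1
    refine this.congr_deriv ?_
    norm_num
  have h3 := h2.sqrt (ne_of_gt hpos)
  have hargpos : 0 < Psi a r β t s + Sfun a r β t s := by positivity
  have h4 := (hΨ.add h3).log (ne_of_gt hargpos)
  refine h4.congr_deriv ?_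
  rw [pow_succ (Sfun a r β t s), pow_zero, one_mul]
  simp only [Pi.add_apply]
  field_simp
  ring
end key
end UBMD

namespace UBMD

def lenLE (E : Expr) (L : ℕ) : Prop := ∀ m ∈ E, m.2.length ≤ L

lemma lenLE_mono {E : Expr} {L L' : ℕ} (h : lenLE E L) (hL : L ≤ L') : lenLE E L' :=
  fun m hm => le_trans (h m hm) hL

lemma lenLE_append {E1 E2 : Expr} {L : ℕ} (h1 : lenLE E1 L) (h2 : lenLE E2 L) :
    lenLE (E1 ++ E2) L := by
  intro m hm
  rcases List.mem_append.mp hm with h | h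
  · exact h1 m h
  · exact h2 m h

lemma lenLE_negE {E : Expr} {L : ℕ} (h : lenLE E L) : lenLE (negE E) L := by
  intro m hm
  rcases List.mem_map.mp hm with ⟨m', hm', rfl⟩
  exact h m' hm'

lemma lenLE_scaleE {E : Expr} {L n : ℕ} (h : lenLE E L) : lenLE (scaleE n E) L := by
  intro m hm
  rcases List.mem_flatten.mp hm with ⟨l, hl, hml⟩
  rw [List.eq_of_mem_replicate hl] at hml
  exact h m hml

lemma lenLE_mulE {E1 E2 : Expr} {L1 L2 : ℕ} (h1 : lenLE E1 L1) (h2 : lenLE E2 L2) :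
    lenLE (mulE E1 E2) (L1 + L2) := by
  intro m hm
  rcases List.mem_flatMap.mp hm with ⟨m1, hm1, hm⟩
  rcases List.mem_map.mp hm with ⟨m2, hm2, rfl⟩
  simp only [mulM, List.length_append]
  exact add_le_add (h1 m1 hm1) (h2 m2 hm2)

lemma len_dM {flip : Fin 4 → Bool} {b : Bool} {l : List (Fin 4)} :
    ∀ m ∈ dM flip b l, m.2.length = l.length := by
  induction l with
  | nil => simp [dM]
  | cons i l ih =>
    intro m hm
    simp only [dM, List.mem_cons, List.mem_map] at hm
    rcases hm with rfl | ⟨m', hm', rfl⟩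
    · simp
    · simp [ih m' hm']

lemma lenLE_dE {E : Expr} {L : ℕ} {flip : Fin 4 → Bool} (h : lenLE E L) :
    lenLE (dE flip E) L := by
  intro m hm
  rcases List.mem_flatMap.mp hm with ⟨m', hm', hmm⟩
  rw [len_dM m hmm]
  exact h m' hm'

lemma lenLE_psiE : lenLE psiE 1 := by
  intro m hm
  simp only [psiE, List.mem_cons, List.not_mem_nil, or_false] at hm
  rcases hm with rfl | rfl | rfl | rfl <;> simp

lemma lenLE_wE : lenLE wE 2 := lenLE_append (lenLE_mulE lenLE_psiE lenLE_psiE) (by intro m hm; simp only [List.mem_singleton] at hm; subst hm; simp)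

lemma lenLE_Dstep {E : Expr} {L : ℕ} {flip : Fin 4 → Bool} {k : ℕ} (h : lenLE E L) :
    lenLE (Dstep flip k E) (L + 2) := by
  apply lenLE_append
  · exact lenLE_mulE (lenLE_dE h) lenLE_wE
  · exact lenLE_scaleE (lenLE_negE (lenLE_mono
      (lenLE_mulE h (lenLE_mulE lenLE_psiE (lenLE_dE lenLE_psiE))) (by omega)))

lemma lenLE_EsIter (j : ℕ) : lenLE (EsIter j) (2*(j+1)+1) := by
  induction j with
  | zero => exact lenLE_Dstep (lenLE_dE lenLE_psiE)
  | succ j ih =>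
    have := lenLE_Dstep (flip := flipS) (k := j+1) ih
    exact lenLE_mono this (by omega)

lemma lenLE_EtIter (j i : ℕ) : lenLE (EtIter j i) (2*(i+j+1)+1) := by
  induction i with
  | zero => exact lenLE_mono (lenLE_EsIter j) (by omega)
  | succ i ih =>
    have := lenLE_Dstep (flip := flipT) (k := i+j+1) ih
    exact lenLE_mono this (by omega)

section bounds

variable (a r β : ℝ)

lemma g_nonneg (hr : 0 < r) (i : Fin 4) (t s : ℝ) : 0 ≤ gfun a r β i t s := by
  have hc : 0 ≤ coef a r β i := by
    fin_cases i <;> simp [coef] <;> positivity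
  exact mul_nonneg hc (Real.exp_pos _).le

lemma g_le_Psi (hr : 0 < r) (i : Fin 4) (t s : ℝ) : gfun a r β i t s ≤ Psi a r β t s := by
  have h0 := g_nonneg a r β hr 0 t s
  have h1 := g_nonneg a r β hr 1 t s
  have h2 := g_nonneg a r β hr 2 t s
  have h3 := g_nonneg a r β hr 3 t s
  rw [Psi_explicit]
  fin_cases i <;> simp <;> linarith

lemma Psi_pos (hr : 0 < r) (t s : ℝ) : 0 < Psi a r β t s := by
  have h0 : 0 < gfun a r β 0 t s := by
    apply mul_pos _ (Real.exp_pos _)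
    simp [coef]
    positivity
  have h1 := g_nonneg a r β hr 1 t s
  have h2 := g_nonneg a r β hr 2 t s
  have h3 := g_nonneg a r β hr 3 t s
  rw [Psi_explicit]; linarith

lemma abs_evalM_le (hr : 0 < r) {L : ℕ} (m : Mon) (t s : ℝ) (hm : m.2.length ≤ L)
    (hψ : 1 ≤ Psi a r β t s) :
    |evalM a r β m t s| ≤ Psi a r β t s ^ L := by
  have habs : |evalM a r β m t s| = (m.2.map (fun i => gfun a r β i t s)).prod := by
    rw [evalM, abs_mul]
    have hb : |bval m.1| = 1 := by cases hb : m.1 <;> simp [bval, hb]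
    rw [hb, one_mul, abs_of_nonneg]
    exact List.prod_nonneg (by
      intro x hx
      rcases List.mem_map.mp hx with ⟨i, _, rfl⟩
      exact g_nonneg a r β hr i t s)
  rw [habs]
  calc (m.2.map (fun i => gfun a r β i t s)).prod ≤ Psi a r β t s ^ m.2.length := by
        clear hm
        induction m.2 with
        | nil => simp
        | cons i l ih =>
          simp only [List.map_cons, List.prod_cons, List.length_cons, pow_succ]
          rw [mul_comm (Psi a r β t s ^ l.length) (Psi a r β t s)]
          apply mul_le_mul (g_le_Psi a r β hr i t s) ih
          · exact List.prod_nonneg (by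
              intro x hx
              rcases List.mem_map.mp hx with ⟨i', _, rfl⟩
              exact g_nonneg a r β hr i' t s)
          · linarith
    _ ≤ Psi a r β t s ^ L := pow_le_pow_right₀ hψ hm

lemma abs_evalE_le (hr : 0 < r) {L : ℕ} (E : Expr) (t s : ℝ) (hlen : lenLE E L)
    (hψ : 1 ≤ Psi a r β t s) :
    |evalE a r β E t s| ≤ E.length * Psi a r β t s ^ L := by
  induction E with
  | nil => simp
  | cons m E ih =>
    have h1 : |evalM a r β m t s| ≤ Psi a r β t s ^ L :=
      abs_evalM_le a r β hr m t s (hlen m List.mem_cons_self) hψ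
    have h2 := ih (fun m' hm' => hlen m' (List.mem_cons_of_mem m hm'))
    rw [evalE_cons]
    calc |evalM a r β m t s + evalE a r β E t s| ≤ _ := abs_add_le _ _
      _ ≤ Psi a r β t s ^ L + E.length * Psi a r β t s ^ L := add_le_add h1 h2
      _ = (m :: E).length * Psi a r β t s ^ L := by
          simp [List.length_cons]; push_cast; ring

lemma final_bound (hr : 0 < r) {k : ℕ} (E : Expr) (t s : ℝ) (hlen : lenLE E (2*k+1))
    (hψ : 2 ≤ Psi a r β t s) :
    |evalE a r β E t s / Sfun a r β t s ^ (2*k+1)| ≤ E.length * 2 ^ (2*k+1) := by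
  set ψ0 := Psi a r β t s with hψ0
  have hpos : 0 < ψ0 ^ 2 - 1 := by nlinarith
  have hS : 0 < Sfun a r β t s := Real.sqrt_pos.mpr hpos
  have hSsq : Sfun a r β t s ^ 2 = ψ0 ^ 2 - 1 := Real.sq_sqrt hpos.le
  have hS1 : 1 ≤ Sfun a r β t s := by nlinarith
  have hψS : ψ0 ≤ 2 * Sfun a r β t s := by nlinarith
  rw [abs_div, abs_of_nonneg (by positivity : (0:ℝ) ≤ Sfun a r β t s ^ (2*k+1))]
  have h1 : |evalE a r β E t s| ≤ E.length * ψ0 ^ (2*k+1) :=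
    abs_evalE_le a r β hr E t s hlen (by linarith)
  calc |evalE a r β E t s| / Sfun a r β t s ^ (2*k+1)
      ≤ (E.length * ψ0 ^ (2*k+1)) / Sfun a r β t s ^ (2*k+1) := by
        apply div_le_div_of_nonneg_right h1 (by positivity) |>.trans_eq rfl
    _ = E.length * (ψ0 / Sfun a r β t s) ^ (2*k+1) := by
        rw [div_pow, mul_div_assoc]
    _ ≤ E.length * 2 ^ (2*k+1) := by
        apply mul_le_mul_of_nonneg_left _ (by positivity)
        apply pow_le_pow_left₀ (by positivity)
        rw [div_le_iff₀ hS]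
        linarith

end bounds

end UBMD

namespace UBMD

section assemble

variable (a r β : ℝ)

lemma L1 (hr : 0 < r) {t' s' : ℝ} (h1 : 1 < Psi a r β t' s') :
    deriv (fun u => phi a r β u s') t' =
      evalE a r β (dE flipT psiE) t' s' / Sfun a r β t' s' ^ (2*0+1) :=
  (hasDerivAt_phi_t a r β hr h1).deriv

lemma L2 (hr : 0 < r) {t s δ : ℝ}
    (hbox : ∀ t' s', |t' - t| < δ → |s' - s| < δ → 1 < Psi a r β t' s')
    {t' s' : ℝ} (ht' : |t' - t| < δ) (hs' : |s' - s| < δ) :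
    deriv (fun s'' => deriv (fun t'' => phi a r β t'' s'') t') s' =
      evalE a r β (EsIter 0) t' s' / Sfun a r β t' s' ^ (2*(0+1)+1) := by
  have hmem : Metric.ball s δ ∈ nhds s' :=
    Metric.isOpen_ball.mem_nhds (by simpa [Real.dist_eq] using hs')
  have hev : (fun s'' => deriv (fun t'' => phi a r β t'' s'') t') =ᶠ[nhds s']
      (fun s'' => evalE a r β (dE flipT psiE) t' s'' / Sfun a r β t' s'' ^ (2*0+1)) := by
    filter_upwards [hmem] with s'' hs''
    exact L1 a r β hr (hbox t' s'' ht' (by simpa [Real.dist_eq] using hs''))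
  rw [hev.deriv_eq]
  have h := (keyS a r β 0 (dE flipT psiE) (hbox t' s' ht' hs')).deriv
  rw [h]
  norm_num [EsIter]

lemma L3 (hr : 0 < r) {t s δ : ℝ}
    (hbox : ∀ t' s', |t' - t| < δ → |s' - s| < δ → 1 < Psi a r β t' s')
    (j : ℕ) : ∀ {t' s' : ℝ}, |t' - t| < δ → |s' - s| < δ →
    iteratedDeriv j
        (fun s' => deriv (fun s'' => deriv (fun t'' => phi a r β t'' s'') t') s') s' =
      evalE a r β (EsIter j) t' s' / Sfun a r β t' s' ^ (2*(j+1)+1) := by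
  induction j with
  | zero =>
    intro t' s' ht' hs'
    rw [iteratedDeriv_zero]
    exact L2 a r β hr hbox ht' hs'
  | succ j ih =>
    intro t' s' ht' hs'
    rw [iteratedDeriv_succ]
    have hmem : Metric.ball s δ ∈ nhds s' :=
      Metric.isOpen_ball.mem_nhds (by simpa [Real.dist_eq] using hs')
    have hev : iteratedDeriv j
        (fun s' => deriv (fun s'' => deriv (fun t'' => phi a r β t'' s'') t') s') =ᶠ[nhds s']
        (fun s'' => evalE a r β (EsIter j) t' s'' / Sfun a r β t' s'' ^ (2*(j+1)+1)) := by
      filter_upwards [hmem] with s'' hs''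
      exact ih ht' (by simpa [Real.dist_eq] using hs'')
    rw [hev.deriv_eq]
    have h := (keyS a r β (j+1) (EsIter j) (hbox t' s' ht' hs')).deriv
    rw [h]
    have he : 2*(j+1)+3 = 2*(j+1+1)+1 := by ring
    rw [he]
    rfl

lemma L4 (hr : 0 < r) {t s δ : ℝ} (hδ : 0 < δ)
    (hbox : ∀ t' s', |t' - t| < δ → |s' - s| < δ → 1 < Psi a r β t' s')
    (j i : ℕ) : ∀ {t' : ℝ}, |t' - t| < δ →
    iteratedDeriv i
        (fun u => iteratedDeriv j
          (fun s' => deriv (fun s'' => deriv (fun t'' => phi a r β t'' s'') u) s') s) t' =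
      evalE a r β (EtIter j i) t' s / Sfun a r β t' s ^ (2*(i+j+1)+1) := by
  have hss : |s - s| < δ := by simpa using hδ
  induction i with
  | zero =>
    intro t' ht'
    rw [iteratedDeriv_zero]
    have h3 := L3 a r β hr hbox j ht' hss
    rw [show 2*(0+j+1)+1 = 2*(j+1)+1 from by ring]
    exact h3
  | succ i ih =>
    intro t' ht'
    rw [iteratedDeriv_succ]
    have hmem : Metric.ball t δ ∈ nhds t' :=
      Metric.isOpen_ball.mem_nhds (by simpa [Real.dist_eq] using ht')
    have hev : iteratedDeriv i
        (fun u => iteratedDeriv j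
          (fun s' => deriv (fun s'' => deriv (fun t'' => phi a r β t'' s'') u) s') s) =ᶠ[nhds t']
        (fun u => evalE a r β (EtIter j i) u s / Sfun a r β u s ^ (2*(i+j+1)+1)) := by
      filter_upwards [hmem] with u hu
      exact ih (by simpa [Real.dist_eq] using hu)
    rw [hev.deriv_eq]
    have h := (keyT a r β (i+j+1) (EtIter j i) (hbox t' s ht' hss)).deriv
    rw [h]
    have he : 2*(i+j+1)+3 = 2*(i+1+j+1)+1 := by ring
    rw [he]
    rfl

end assemble

end UBMD


open UBMD

/-- Upper bounds on all mixed derivatives `∂_t^i ∂_s^j (φ''_st)` (Lemma 4):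
for each `n` there is a constant `Cₙ`, independent of `a`, `r`, `β` and `T`, such that
`|∂_t^i ∂_s^j φ''_st(t,s)| ≤ Cₙ e^{(18n+22)T}` whenever `i + j ≤ n`, `t ∈ [0,1]` and
`2 ≤ φ(t,s) ≤ T`. -/
theorem upper_bounds_mixed_derivatives (n : ℕ) :
    ∃ C : ℝ, 0 < C ∧
      ∀ (a r β T t s : ℝ), 0 ≤ a → 0 < r → β ∈ Set.Ioc 0 (π / 2) → 2 ≤ T →
        t ∈ Set.Icc (0 : ℝ) 1 → 2 ≤ phi a r β t s → phi a r β t s ≤ T →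
        ∀ i j : ℕ, i + j ≤ n →
          |iteratedDeriv i
              (fun t' => iteratedDeriv j
                (fun s' => deriv (fun s'' => deriv (fun t'' => phi a r β t'' s'') t') s') s) t| ≤
            C * Real.exp ((18 * n + 22) * T) := by
  set C : ℝ := 1 + ∑ i ∈ Finset.range (n+1), ∑ j ∈ Finset.range (n+1),
      ((EtIter j i).length : ℝ) * 2 ^ (2*(i+j+1)+1) with hC
  have hCpos : 0 < C := by
    rw [hC]
    have : (0:ℝ) ≤ ∑ i ∈ Finset.range (n+1), ∑ j ∈ Finset.range (n+1),
        ((EtIter j i).length : ℝ) * 2 ^ (2*(i+j+1)+1) := by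
      apply Finset.sum_nonneg
      intro i _
      apply Finset.sum_nonneg
      intro j _
      positivity
    linarith
  refine ⟨C, hCpos, ?_⟩
  intro a r β T t s _ha hr _hβ hT _ht hphi2 _hphiT i j hij
  -- Step 1: Psi ≥ 2 at (t,s)
  have hphi := hphi2
  rw [phi_eq a r β hr t s] at hphi
  have hψpos : 0 < Psi a r β t s := Psi_pos a r β hr t s
  have hsqle : Real.sqrt (Psi a r β t s ^ 2 - 1) ≤ Psi a r β t s := by
    calc Real.sqrt (Psi a r β t s ^ 2 - 1) ≤ Real.sqrt (Psi a r β t s ^ 2) :=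
          Real.sqrt_le_sqrt (by linarith)
      _ = Psi a r β t s := Real.sqrt_sq hψpos.le
  have hXpos : 0 < Psi a r β t s + Real.sqrt (Psi a r β t s ^ 2 - 1) := by positivity
  have hexpX : Real.exp 2 ≤ Psi a r β t s + Real.sqrt (Psi a r β t s ^ 2 - 1) := by
    have h := Real.exp_le_exp.mpr hphi
    rwa [Real.exp_log hXpos] at h
  have he2 : (4:ℝ) ≤ Real.exp 2 := by
    have h1 : (2:ℝ) ≤ Real.exp 1 := by
      have := Real.add_one_le_exp (1:ℝ); linarith
    have h2 : Real.exp 2 = Real.exp 1 * Real.exp 1 := by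
      rw [← Real.exp_add]; norm_num
    nlinarith
  have hψ2 : 2 ≤ Psi a r β t s := by linarith
  -- Step 2: a box around (t,s) where Psi > 1
  have hcont : Continuous fun p : ℝ × ℝ => Psi a r β p.1 p.2 := by
    simp only [Psi_explicit, gfun]
    fun_prop
  have hopen : IsOpen {p : ℝ × ℝ | 1 < Psi a r β p.1 p.2} :=
    isOpen_lt continuous_const hcont
  have hmem : (t, s) ∈ {p : ℝ × ℝ | 1 < Psi a r β p.1 p.2} := by
    simp only [Set.mem_setOf_eq]; linarith
  obtain ⟨δ, hδ, hball⟩ := Metric.isOpen_iff.mp hopen (t, s) hmem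
  have hbox : ∀ t' s', |t' - t| < δ → |s' - s| < δ → 1 < Psi a r β t' s' := by
    intro t' s' h1 h2
    have hmem2 : (t', s') ∈ Metric.ball (t, s) δ := by
      rw [Metric.mem_ball, Prod.dist_eq]
      exact max_lt (by simpa [Real.dist_eq] using h1) (by simpa [Real.dist_eq] using h2)
    have h3 := hball hmem2
    simpa only [Set.mem_setOf_eq] using h3
  -- Step 3: identify the nested derivative
  have hL4 := L4 a r β hr hδ hbox j i (t' := t) (by simpa using hδ)
  rw [hL4]
  -- Step 4: bound it
  have hb := final_bound a r β hr (k := i+j+1) (EtIter j i) t s (lenLE_EtIter j i) hψ2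
  refine hb.trans ?_
  have hterm : ((EtIter j i).length : ℝ) * 2 ^ (2*(i+j+1)+1) ≤ C - 1 := by
    rw [hC]
    have hi : i ∈ Finset.range (n+1) := Finset.mem_range.mpr (by omega)
    have hj : j ∈ Finset.range (n+1) := Finset.mem_range.mpr (by omega)
    have h1 : ((EtIter j i).length : ℝ) * 2 ^ (2*(i+j+1)+1) ≤
        ∑ j' ∈ Finset.range (n+1), ((EtIter j' i).length : ℝ) * 2 ^ (2*(i+j'+1)+1) :=
      Finset.single_le_sum (f := fun j' => ((EtIter j' i).length : ℝ) * 2 ^ (2*(i+j'+1)+1))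
        (fun j' _ => by positivity) hj
    have h2 : ∑ j' ∈ Finset.range (n+1), ((EtIter j' i).length : ℝ) * 2 ^ (2*(i+j'+1)+1) ≤
        ∑ i' ∈ Finset.range (n+1), ∑ j' ∈ Finset.range (n+1),
          ((EtIter j' i').length : ℝ) * 2 ^ (2*(i'+j'+1)+1) :=
      Finset.single_le_sum (f := fun i' => ∑ j' ∈ Finset.range (n+1),
          ((EtIter j' i').length : ℝ) * 2 ^ (2*(i'+j'+1)+1))
        (fun i' _ => Finset.sum_nonneg (fun j' _ => by positivity)) hi
    linarith
  have hexp1 : 1 ≤ Real.exp ((18 * n + 22) * T) := by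
    apply Real.one_le_exp
    have hn : (0:ℝ) ≤ 18 * n + 22 := by positivity
    nlinarith
  calc ((EtIter j i).length : ℝ) * 2 ^ (2*(i+j+1)+1) ≤ C - 1 := hterm
    _ ≤ C := by linarith
    _ = C * 1 := by ring
    _ ≤ C * Real.exp ((18 * n + 22) * T) := by
        apply mul_le_mul_of_nonneg_left hexp1 hCpos.le

end
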